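/- Let A be an adjacency matrix of a simple graph on M vertices (a real symmetric M×M matrix with zero diagonal and entries in {0,1}), let π be a permutation of Fin M, and define Ã by Ã i j = A (π i) (π j). Fix a pattern n₀ : Fin M → ℕ, and for any real symmetric M×M matrix B and index k : Fin M define the partition-averaged photon distribution s_k(B) = ∑_{τ ∈ Perm(Fin M)} (n₀ (τ k)) · (∏ᵢ (n₀ i)!)⁻¹ · (haf(B ⊘ J_{n₀ ∘ τ}))². Then for every k : Fin M, s_k(Ã) = s_{π k}(A); that is, the partition-averaged photon distributions of isomorphic graphs are identical up to the permutation π of output modes. -/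

import Mathlib

open scoped Classical in
/-- The hafnian of a matrix: the sum over all partitions of the index type into
unordered pairs (perfect matchings) of the products of the corresponding entries.
For a symmetric matrix `B` the term `(∑ u ∈ p, ∑ v ∈ p.erase u, B u v) / 2`
equals `B u v` for the pair `p = {u, v}`. -/
noncomputable def hafnian {ι : Type*} [Fintype ι] [DecidableEq ι]
    (B : Matrix ι ι ℝ) : ℝ :=
  ∑ Mch ∈ Finset.univ.filter
      (fun Mch : Finset (Finset ι) =>
        (∀ p ∈ Mch, p.card = 2) ∧ ∀ x : ι, ∃! p, p ∈ Mch ∧ x ∈ p),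
    ∏ p ∈ Mch, (∑ u ∈ p, ∑ v ∈ p.erase u, B u v) / 2

/-- The reduced Kronecker product `A ⊘ J_n`, indexed by `Σ i, Fin (n i)`,
whose `((i,a),(j,b))` entry is `A i j`. -/
lemma hafnian_reindex_aux {α β : Type*} [DecidableEq α] [DecidableEq β]
      (f : α ≃ β) (M : Finset (Finset α))
      (hM : (∀ p ∈ M, p.card = 2) ∧ ∀ x : α, ∃! p, p ∈ M ∧ x ∈ p) :
      ((∀ p ∈ M.image (Finset.image (⇑f)), p.card = 2) ∧
        ∀ x : β, ∃! p, p ∈ M.image (Finset.image (⇑f)) ∧ x ∈ p) := by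
  constructor
  · intro p' hp'
    obtain ⟨p, hp, rfl⟩ := Finset.mem_image.1 hp'
    rw [Finset.card_image_of_injective _ f.injective]
    exact hM.1 p hp
  · intro x
    obtain ⟨p, ⟨hpM, hxp⟩, huniq⟩ := hM.2 (f.symm x)
    refine ⟨p.image f, ⟨Finset.mem_image_of_mem _ hpM, ?_⟩, ?_⟩
    · have := Finset.mem_image_of_mem f hxp
      simpa using this
    · rintro q' ⟨hq'M, hxq'⟩
      obtain ⟨q, hq, rfl⟩ := Finset.mem_image.1 hq'M
      obtain ⟨y, hy, hyx⟩ := Finset.mem_image.1 hxq'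
      have : y = f.symm x := by
        apply f.injective; simp [hyx]
      subst this
      rw [huniq q ⟨hq, hy⟩]

lemma hafnian_reindex {ι κ : Type*} [Fintype ι] [DecidableEq ι] [Fintype κ] [DecidableEq κ]
    (e : ι ≃ κ) (B : Matrix κ κ ℝ) :
    hafnian (fun i j => B (e i) (e j)) = hafnian B := by
  classical
  unfold hafnian
  have hcomp : ∀ (M : Finset (Finset ι)),
      (M.image (Finset.image (⇑e))).image (Finset.image (⇑e.symm)) = M := by
    intro M
    rw [Finset.image_image]
    have : (Finset.image (⇑e.symm) ∘ Finset.image (⇑e)) = id := by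
      funext p
      simp [Finset.image_image, Function.comp]
    rw [this, Finset.image_id]
  have hcomp' : ∀ (M : Finset (Finset κ)),
      (M.image (Finset.image (⇑e.symm))).image (Finset.image (⇑e)) = M := by
    intro M
    rw [Finset.image_image]
    have : (Finset.image (⇑e) ∘ Finset.image (⇑e.symm)) = id := by
      funext p
      simp [Finset.image_image, Function.comp]
    rw [this, Finset.image_id]
  refine Finset.sum_nbij' (fun Mch => Mch.image (Finset.image (⇑e)))
    (fun Mch => Mch.image (Finset.image (⇑e.symm))) ?_ ?_ ?_ ?_ ?_
  · intro M hM
    simp only [Finset.mem_filter, Finset.mem_univ, true_and] at hM ⊢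
    exact hafnian_reindex_aux e M hM
  · intro M hM
    simp only [Finset.mem_filter, Finset.mem_univ, true_and] at hM ⊢
    exact hafnian_reindex_aux e.symm M hM
  · intro M _; exact hcomp M
  · intro M _; exact hcomp' M
  · intro M _
    rw [Finset.prod_image]
    · refine Finset.prod_congr rfl fun p _ => ?_
      congr 1
      rw [Finset.sum_image (fun x _ y _ h => e.injective h)]
      refine Finset.sum_congr rfl fun u hu => ?_
      rw [← Finset.image_erase e.injective,
        Finset.sum_image (fun x _ y _ h => e.injective h)]
    · intro p _ q _ h
      exact Finset.image_injective e.injective h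

def rkron {ι : Type*} (A : Matrix ι ι ℝ) (n : ι → ℕ) :
    Matrix ((i : ι) × Fin (n i)) ((i : ι) × Fin (n i)) ℝ :=
  fun x y => A x.1 y.1

theorem stmt_17 (M : ℕ) (A : Matrix (Fin M) (Fin M) ℝ)
    (hAsymm : A.IsSymm) (hAdiag : ∀ i, A i i = 0)
    (hA01 : ∀ i j, A i j = 0 ∨ A i j = 1)
    (π : Equiv.Perm (Fin M)) (Atil : Matrix (Fin M) (Fin M) ℝ)
    (hAtil : ∀ i j, Atil i j = A (π i) (π j))
    (n₀ : Fin M → ℕ)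
    (s : Matrix (Fin M) (Fin M) ℝ → Fin M → ℝ)
    (hs : ∀ B k, s B k =
      ∑ τ : Equiv.Perm (Fin M),
        (n₀ (τ k) : ℝ) * ((∏ i, Nat.factorial (n₀ i) : ℕ) : ℝ)⁻¹ *
          hafnian (rkron B (n₀ ∘ τ)) ^ 2) :
    ∀ k, s Atil k = s A (π k) := by
  intro k
  rw [hs, hs]
  rw [← Equiv.sum_comp (Equiv.mulRight π)]
  refine Finset.sum_congr rfl fun σ _ => ?_
  have hτk : (Equiv.mulRight π σ) k = σ (π k) := rfl
  have hhaf : hafnian (rkron Atil (n₀ ∘ (Equiv.mulRight π σ)))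
      = hafnian (rkron A (n₀ ∘ σ)) := by
    have : rkron Atil (n₀ ∘ (Equiv.mulRight π σ)) =
        fun x y => rkron A (n₀ ∘ σ)
          ((Equiv.sigmaCongr π fun _ => Equiv.refl _) x)
          ((Equiv.sigmaCongr π fun _ => Equiv.refl _) y) := by
      funext x y
      simp [rkron, hAtil, Equiv.sigmaCongr]
      rfl
    rw [this]
    exact hafnian_reindex _ _
  rw [hτk, hhaf]
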